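/- Fix t ∈ ℝ and let V = (1/√2)[[1,i],[i,1]]. Define a 2×2 matrix-valued function on {z ∈ ℂ : |z| < 1, Im z ≠ 0} by E(z) = diag((z−1)^{−1/4}, (z−1)^{1/4}) · V · diag(e^{2it/3}, e^{−2it/3}) for Im z > 0, and E(z) = diag((z−1)^{−1/4}, (z−1)^{1/4}) · V · [[0,1],[−1,0]] · diag(e^{2it/3}, e^{−2it/3}) for Im z < 0, using the principal branch −π < arg(z−1) < π. Then E extends to a holomorphic matrix-valued function on the whole open unit disc {z : |z| < 1}. -/

import Mathlib

open Complex Matrix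

/-- `V = (1/√2)[[1, i], [i, 1]]`. -/
noncomputable def Vmat : Matrix (Fin 2) (Fin 2) ℂ :=
  ((Real.sqrt 2 : ℂ))⁻¹ • !![1, I; I, 1]

lemma log_neg_of_im_neg {w : ℂ} (h : w.im < 0) :
    Complex.log (-w) = Complex.log w + Real.pi * I := by
  rw [Complex.log, Complex.log, Complex.arg_neg_eq_arg_add_pi_of_im_neg h, norm_neg]
  push_cast
  ring

lemma log_neg_of_im_pos {w : ℂ} (h : 0 < w.im) :
    Complex.log (-w) = Complex.log w - Real.pi * I := by
  rw [Complex.log, Complex.log, Complex.arg_neg_eq_arg_sub_pi_of_im_pos h, norm_neg]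
  push_cast
  ring

noncomputable def Afun (α : ℂ) (z : ℂ) : ℂ :=
  Complex.exp ((Complex.log (1 - z) + Real.pi * I) * α)

lemma Afun_diffOn (α : ℂ) :
    DifferentiableOn ℂ (Afun α) (Metric.ball (0 : ℂ) 1) := by
  apply DifferentiableOn.cexp
  apply DifferentiableOn.mul _ (differentiableOn_const α)
  apply DifferentiableOn.add _ (differentiableOn_const _)
  intro z hz
  have h1 : (1 : ℂ) - z ∈ Complex.slitPlane := by
    simp only [Metric.mem_ball, dist_zero_right] at hz
    left
    have hre : |z.re| < 1 := lt_of_le_of_lt (Complex.abs_re_le_norm z) hz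
    simp only [Complex.sub_re, Complex.one_re]
    linarith [abs_lt.mp hre]
  exact (Complex.differentiableAt_log h1).comp z
    (differentiableAt_const (1:ℂ) |>.sub differentiableAt_id) |>.differentiableWithinAt

lemma diag_mul (a b : ℂ) (M : Matrix (Fin 2) (Fin 2) ℂ) :
    (Matrix.of fun j k => ![a, b] j * M j k) = !![a, 0; 0, b] * M := by
  ext i j
  fin_cases i <;> fin_cases j <;>
    simp [Matrix.mul_apply, Fin.sum_univ_succ]

lemma jump_id (a b : ℂ) :
    !![-I * a, 0; 0, I * b] * Vmat = !![a, 0; 0, b] * Vmat * !![0, 1; -1, 0] := by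
  ext i j
  fin_cases i <;> fin_cases j <;>
    simp [Vmat, Matrix.mul_apply, Fin.sum_univ_succ] <;> ring_nf <;>
      simp [Complex.I_sq]

/-- The analytic prefactor of the Bessel local parametrix extends holomorphically
to the unit disc: there is `F`, holomorphic entrywise on `{|z| < 1}`, agreeing with
`diag((z−1)^{−1/4}, (z−1)^{1/4}) V e^{2itσ₃/3}` for `Im z > 0` and with
`diag((z−1)^{−1/4}, (z−1)^{1/4}) V [[0,1],[−1,0]] e^{2itσ₃/3}` for `Im z < 0`. -/
theorem stmt13 (t : ℝ) :
    ∃ F : ℂ → Matrix (Fin 2) (Fin 2) ℂ,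
      (∀ j k : Fin 2, DifferentiableOn ℂ (fun z => F z j k) (Metric.ball (0 : ℂ) 1)) ∧
      (∀ z ∈ Metric.ball (0 : ℂ) 1, 0 < z.im →
        F z = !![(z - 1) ^ (-(1 : ℂ) / 4), 0; 0, (z - 1) ^ ((1 : ℂ) / 4)] * Vmat *
          !![Complex.exp (2 * I * (t : ℂ) / 3), 0;
             0, Complex.exp (-(2 * I * (t : ℂ) / 3))]) ∧
      (∀ z ∈ Metric.ball (0 : ℂ) 1, z.im < 0 →
        F z = !![(z - 1) ^ (-(1 : ℂ) / 4), 0; 0, (z - 1) ^ ((1 : ℂ) / 4)] * Vmat *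
          !![0, 1; -1, 0] *
          !![Complex.exp (2 * I * (t : ℂ) / 3), 0;
             0, Complex.exp (-(2 * I * (t : ℂ) / 3))]) := by
  set T : Matrix (Fin 2) (Fin 2) ℂ :=
    !![Complex.exp (2 * I * (t : ℂ) / 3), 0; 0, Complex.exp (-(2 * I * (t : ℂ) / 3))] with hT
  refine ⟨fun z => Matrix.of fun j k =>
      ![Afun (-(1:ℂ)/4) z, Afun ((1:ℂ)/4) z] j * (Vmat * T) j k, ?_, ?_, ?_⟩
  · intro j k
    have hd : DifferentiableOn ℂ (fun z => ![Afun (-(1:ℂ)/4) z, Afun ((1:ℂ)/4) z] j)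
        (Metric.ball (0 : ℂ) 1) := by
      fin_cases j
      · exact Afun_diffOn _
      · exact Afun_diffOn _
    exact hd.mul (differentiableOn_const _)
  · intro z hz him
    have hz1 : z - 1 ≠ 0 := by
      intro h
      have : z = 1 := by linear_combination h
      simp [this] at hz
    have hlog : Complex.log (z - 1) = Complex.log (1 - z) + Real.pi * I := by
      have h1 : (1 - z).im < 0 := by simp [Complex.sub_im]; linarith
      simpa [neg_sub] using log_neg_of_im_neg h1
    have hA : ∀ α : ℂ, Afun α z = (z - 1) ^ α := fun α => by
      rw [Complex.cpow_def_of_ne_zero hz1, Afun, hlog]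
    show (Matrix.of fun j k =>
      ![Afun (-(1:ℂ)/4) z, Afun ((1:ℂ)/4) z] j * (Vmat * T) j k) = _
    rw [diag_mul, hA, hA, ← Matrix.mul_assoc]
  · intro z hz him
    have hz1 : z - 1 ≠ 0 := by
      intro h
      have : z = 1 := by linear_combination h
      simp [this] at hz
    have hlog : Complex.log (1 - z) = Complex.log (z - 1) + Real.pi * I := by
      have h1 : (z - 1).im < 0 := by simp [Complex.sub_im]; linarith
      simpa [neg_sub] using log_neg_of_im_neg h1
    have hexp : Complex.exp ((Real.pi : ℂ) / 2 * I) = I := by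
      rw [show ((Real.pi : ℂ) / 2 * I) = (↑(Real.pi / 2) * I) by push_cast; ring,
        Complex.exp_mul_I]
      simp
    have hA : Afun (-(1:ℂ)/4) z = -I * (z - 1) ^ (-(1:ℂ)/4) := by
      rw [Complex.cpow_def_of_ne_zero hz1, Afun, hlog]
      rw [show ((Complex.log (z-1) + ↑Real.pi * I + ↑Real.pi * I) * (-(1:ℂ)/4))
          = -((Real.pi : ℂ)/2 * I) + Complex.log (z-1) * (-(1:ℂ)/4) by ring,
        Complex.exp_add, Complex.exp_neg, hexp]
      rw [Complex.inv_I]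
    have hB : Afun ((1:ℂ)/4) z = I * (z - 1) ^ ((1:ℂ)/4) := by
      rw [Complex.cpow_def_of_ne_zero hz1, Afun, hlog]
      rw [show ((Complex.log (z-1) + ↑Real.pi * I + ↑Real.pi * I) * ((1:ℂ)/4))
          = (Real.pi : ℂ)/2 * I + Complex.log (z-1) * ((1:ℂ)/4) by ring,
        Complex.exp_add, hexp]
    show (Matrix.of fun j k =>
      ![Afun (-(1:ℂ)/4) z, Afun ((1:ℂ)/4) z] j * (Vmat * T) j k) = _
    rw [diag_mul, hA, hB, ← Matrix.mul_assoc, jump_id, Matrix.mul_assoc, Matrix.mul_assoc,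
      ← Matrix.mul_assoc]
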